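/- Every positive type D matrix is a hidden Z-matrix. -/

import Mathlib

open Matrix

/-- A Z-matrix: all off-diagonal entries are nonpositive. -/
def IsZMatrix {ι : Type*} [Fintype ι] [DecidableEq ι] (A : Matrix ι ι ℝ) : Prop :=
  ∀ i j, i ≠ j → A i j ≤ 0

/-- A hidden Z-matrix: AX = Y for Z-matrices X, Y, with rᵀX + sᵀY > 0 for some r, s ≥ 0. -/
def IsHiddenZ {ι : Type*} [Fintype ι] [DecidableEq ι] (A : Matrix ι ι ℝ) : Prop :=
  ∃ X Y : Matrix ι ι ℝ, ∃ r s : ι → ℝ,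
    IsZMatrix X ∧ IsZMatrix Y ∧ A * X = Y ∧
    (∀ i, 0 ≤ r i) ∧ (∀ i, 0 ≤ s i) ∧
    (∀ j, 0 < (Matrix.vecMul r X + Matrix.vecMul s Y) j)

/-- The principal minor of `A` indexed by `α`. -/
def principalMinor {ι : Type*} [Fintype ι] [DecidableEq ι] (A : Matrix ι ι ℝ)
    (α : Finset ι) : ℝ :=
  (A.submatrix (fun i : {x // x ∈ α} => (i : ι)) (fun j : {x // x ∈ α} => (j : ι))).det

/-- Lower bidiagonal matrix with 1 on the diagonal, -1 on the subdiagonal. -/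
def Kmat (n : ℕ) : Matrix (Fin n) (Fin n) ℝ :=
  fun i j => if (i : ℕ) = (j : ℕ) then 1 else if (i : ℕ) = (j : ℕ) + 1 then -1 else 0

/-- Lower triangular matrix of ones. -/
def Lmat (n : ℕ) : Matrix (Fin n) (Fin n) ℝ :=
  fun i j => if (j : ℕ) ≤ (i : ℕ) then 1 else 0

/-- Increment vector of α. -/
def dvec {n : ℕ} (α : Fin n → ℝ) : Fin n → ℝ :=
  fun k => α k - if h : (k : ℕ) = 0 then 0
    else α ⟨(k : ℕ) - 1, lt_of_le_of_lt (Nat.sub_le _ _) k.isLt⟩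

lemma dvec_pos {n : ℕ} (α : Fin n → ℝ) (hpos : ∀ i, 0 < α i) (hmono : StrictMono α)
    (k : Fin n) : 0 < dvec α k := by
  unfold dvec
  split_ifs with h
  · simpa using hpos k
  · have hlt : (⟨(k : ℕ) - 1, lt_of_le_of_lt (Nat.sub_le _ _) k.isLt⟩ : Fin n) < k := by
      simp [Fin.lt_def]; omega
    have := hmono hlt
    linarith

lemma AmulKT {n : ℕ} (α : Fin n → ℝ) (A : Matrix (Fin n) (Fin n) ℝ)
    (hA : ∀ i j, A i j = α (min i j)) :
    A * (Kmat n)ᵀ = Lmat n * Matrix.diagonal (dvec α) := by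
  ext i j
  rw [Matrix.mul_apply, Matrix.mul_diagonal]
  rcases Nat.eq_zero_or_pos (j : ℕ) with hj | hj
  · -- j is the first index
    have hK : ∀ k : Fin n, (Kmat n)ᵀ k j = if k = j then 1 else 0 := by
      intro k
      simp only [Kmat, transpose_apply, Fin.ext_iff]
      split_ifs <;> first | rfl | (exfalso; omega)
    have hsum : ∑ k, A i k * (Kmat n)ᵀ k j = A i j := by
      simp only [hK, mul_ite, mul_one, mul_zero]
      simp
    rw [hsum]
    have hji : j ≤ i := by
      rw [Fin.le_def]; omega
    have hmin : min i j = j := min_eq_right hji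
    rw [hA, hmin]
    unfold Lmat dvec
    rw [if_pos (by omega : (j:ℕ) ≤ (i:ℕ)), dif_pos hj]
    ring
  · -- j has a predecessor j'
    set j' : Fin n := ⟨(j : ℕ) - 1, lt_of_le_of_lt (Nat.sub_le _ _) j.isLt⟩ with hj'
    have hj'v : (j' : ℕ) = (j : ℕ) - 1 := rfl
    have hK : ∀ k : Fin n, (Kmat n)ᵀ k j =
        (if k = j then (1:ℝ) else 0) + (if k = j' then -1 else 0) := by
      intro k
      simp only [Kmat, transpose_apply, Fin.ext_iff]
      split_ifs <;> first | (exfalso; omega) | norm_num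
    have hsum : ∑ k, A i k * (Kmat n)ᵀ k j = A i j - A i j' := by
      simp only [hK, mul_add, mul_ite, mul_one, mul_zero, mul_neg, Finset.sum_add_distrib]
      simp [sub_eq_add_neg]
    rw [hsum, hA, hA]
    unfold Lmat dvec
    rw [dif_neg (by omega : ¬ (j:ℕ) = 0)]
    rcases le_or_gt (j : ℕ) (i : ℕ) with hle | hlt
    · have h1 : min i j = j := min_eq_right (by rw [Fin.le_def]; omega)
      have h2 : min i j' = j' := min_eq_right (by rw [Fin.le_def, hj']; simp; omega)
      rw [h1, h2, if_pos hle]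
      ring
    · have h1 : min i j = i := min_eq_left (by rw [Fin.le_def]; omega)
      have h2 : min i j' = i := min_eq_left (by rw [Fin.le_def, hj']; simp; omega)
      rw [h1, h2, if_neg (by omega)]
      ring

lemma LmulK {n : ℕ} : Lmat n * Kmat n = 1 := by
  ext i j
  rw [Matrix.mul_apply, Matrix.one_apply]
  rcases lt_or_ge ((j : ℕ) + 1) n with hjs | hjs
  · set j' : Fin n := ⟨(j : ℕ) + 1, hjs⟩ with hj'
    have hK : ∀ k : Fin n, Kmat n k j =
        (if k = j then (1:ℝ) else 0) + (if k = j' then -1 else 0) := by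
      intro k
      simp only [Kmat, Fin.ext_iff, hj']
      split_ifs <;> simp_all <;> omega
    have hsum : ∑ k, Lmat n i k * Kmat n k j = Lmat n i j - Lmat n i j' := by
      simp only [hK, mul_add, mul_ite, mul_one, mul_zero, mul_neg, Finset.sum_add_distrib]
      simp [sub_eq_add_neg]
    rw [hsum]
    unfold Lmat
    simp only [Fin.ext_iff]
    have hj'v : (j' : ℕ) = (j : ℕ) + 1 := rfl
    split_ifs <;> first | (exfalso; omega) | norm_num
  · have hK : ∀ k : Fin n, Kmat n k j = if k = j then (1:ℝ) else 0 := by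
      intro k
      simp only [Kmat, Fin.ext_iff]
      split_ifs <;> first | rfl | omega
    have hsum : ∑ k, Lmat n i k * Kmat n k j = Lmat n i j := by
      simp only [hK, mul_ite, mul_one, mul_zero]
      simp
    rw [hsum]
    unfold Lmat
    simp only [Fin.ext_iff]
    have : (i : ℕ) < n := i.isLt
    split_ifs <;> first | rfl | omega

theorem typeD_hiddenZ {n : ℕ} (α : Fin n → ℝ) (hpos : ∀ i, 0 < α i)
    (hmono : StrictMono α) (A : Matrix (Fin n) (Fin n) ℝ)
    (hA : ∀ i j, A i j = α (min i j)) :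
    IsHiddenZ A := by
  have hd := dvec_pos α hpos hmono
  set Dinv : Matrix (Fin n) (Fin n) ℝ := Matrix.diagonal (fun k => (dvec α k)⁻¹) with hDinv
  set X : Matrix (Fin n) (Fin n) ℝ := (Kmat n)ᵀ * Dinv * Kmat n with hX
  refine ⟨X, 1, 0, (fun _ => 1), ?_, ?_, ?_, ?_, ?_, ?_⟩
  · -- X is a Z-matrix
    intro i j hij
    have hXij : X i j = ∑ k, ((Kmat n)ᵀ i k * (dvec α k)⁻¹) * Kmat n k j := by
      rw [hX, Matrix.mul_apply]
      congr 1
      ext k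
      rw [hDinv, Matrix.mul_diagonal]
    rw [hXij]
    apply Finset.sum_nonpos
    intro k _
    have hKK : Kmat n k i * Kmat n k j ≤ 0 := by
      have : (i : ℕ) ≠ (j : ℕ) := fun h => hij (Fin.ext h)
      simp only [Kmat]
      split_ifs <;> first | (exfalso; omega) | norm_num
    have h1 : (0:ℝ) ≤ (dvec α k)⁻¹ := le_of_lt (inv_pos.mpr (hd k))
    have : (Kmat n)ᵀ i k * (dvec α k)⁻¹ * Kmat n k j
        = (Kmat n k i * Kmat n k j) * (dvec α k)⁻¹ := by
      simp only [transpose_apply]; ring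
    rw [this]
    exact mul_nonpos_of_nonpos_of_nonneg hKK h1
  · -- 1 is a Z-matrix
    intro i j hij
    simp [Matrix.one_apply_ne hij]
  · -- A * X = 1
    have hDD : Matrix.diagonal (dvec α) * Dinv = 1 := by
      rw [hDinv, Matrix.diagonal_mul_diagonal]
      have : (fun k => dvec α k * (dvec α k)⁻¹) = fun _ => (1:ℝ) := by
        funext k
        exact mul_inv_cancel₀ (ne_of_gt (hd k))
      rw [this, Matrix.diagonal_one]
    calc A * X = (A * (Kmat n)ᵀ) * Dinv * Kmat n := by
          rw [hX, ← Matrix.mul_assoc, ← Matrix.mul_assoc]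
      _ = Lmat n * Matrix.diagonal (dvec α) * Dinv * Kmat n := by
          rw [AmulKT α A hA]
      _ = Lmat n * (Matrix.diagonal (dvec α) * Dinv) * Kmat n := by
          rw [Matrix.mul_assoc (Lmat n)]
      _ = Lmat n * Kmat n := by rw [hDD, Matrix.mul_one]
      _ = 1 := LmulK
  · intro i; exact le_refl 0
  · intro i; exact zero_le_one
  · intro j
    simp [Matrix.zero_vecMul, Matrix.vecMul_one]
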